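/- Let m > 0. There exists a constant C > 0 such that for every r ≥ 0: ∫_r^∞ ( J₁(m√(s²−r²))² / √(s²−r²) ) ds ≤ C, where the integrand is extended continuously at s = r (the extension by 0 suffices since J₁(mw)²/w → 0 as w → 0⁺). -/

import Mathlib

open Real Set Filter MeasureTheory intervalIntegral
open scoped ENNReal Topology

set_option maxHeartbeats 1000000

/-- The Bessel function of the first kind of order one,
`J₁(x) = (1/π) ∫₀^π cos(θ − x sin θ) dθ`. -/
noncomputable def besselJ1 (x : ℝ) : ℝ :=
  (1 / π) * ∫ θ in (0:ℝ)..π, Real.cos (θ - x * Real.sin θ)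

noncomputable def besselJ1D (x : ℝ) : ℝ :=
  (1 / π) * ∫ θ in (0:ℝ)..π, Real.sin (θ - x * Real.sin θ) * Real.sin θ

noncomputable def besselJ1DD (x : ℝ) : ℝ :=
  (1 / π) * ∫ θ in (0:ℝ)..π, -(Real.cos (θ - x * Real.sin θ) * Real.sin θ ^ 2)

lemma besselJ1_inner_hasDerivAt (θ x : ℝ) :
    HasDerivAt (fun y : ℝ => θ - y * Real.sin θ) (-Real.sin θ) x := by
  simpa using ((hasDerivAt_id x).mul_const (Real.sin θ)).const_sub θ

lemma hasDerivAt_besselJ1 (x : ℝ) : HasDerivAt besselJ1 (besselJ1D x) x := by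
  have key : HasDerivAt (fun y => ∫ θ in (0:ℝ)..π, Real.cos (θ - y * Real.sin θ))
      (∫ θ in (0:ℝ)..π, Real.sin (θ - x * Real.sin θ) * Real.sin θ) x := by
    have := intervalIntegral.hasDerivAt_integral_of_dominated_loc_of_deriv_le
      (F := fun y θ => Real.cos (θ - y * Real.sin θ))
      (F' := fun y θ => Real.sin (θ - y * Real.sin θ) * Real.sin θ)
      (x₀ := x) (a := (0:ℝ)) (b := π) (bound := fun _ => 1) (μ := volume) (s := univ)
      univ_mem ?_ ?_ ?_ ?_ ?_ ?_
    · exact this.2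
    · filter_upwards with y
      exact (Continuous.aestronglyMeasurable (by continuity))
    · exact (Continuous.intervalIntegrable (by continuity) _ _)
    · exact (Continuous.aestronglyMeasurable (by continuity))
    · filter_upwards with θ _ y _
      simpa [Real.norm_eq_abs, abs_mul] using
        mul_le_one₀ (Real.abs_sin_le_one _) (abs_nonneg _) (Real.abs_sin_le_one _)
    · exact intervalIntegrable_const
    · filter_upwards with θ _ y _
      have h1 := besselJ1_inner_hasDerivAt θ y
      have := (Real.hasDerivAt_cos (θ - y * Real.sin θ)).comp y h1
      exact this.congr_deriv (by ring)
  unfold besselJ1 besselJ1D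
  exact key.const_mul (1 / π)

lemma hasDerivAt_besselJ1D (x : ℝ) : HasDerivAt besselJ1D (besselJ1DD x) x := by
  have key : HasDerivAt (fun y => ∫ θ in (0:ℝ)..π, Real.sin (θ - y * Real.sin θ) * Real.sin θ)
      (∫ θ in (0:ℝ)..π, -(Real.cos (θ - x * Real.sin θ) * Real.sin θ ^ 2)) x := by
    have := intervalIntegral.hasDerivAt_integral_of_dominated_loc_of_deriv_le
      (F := fun y θ => Real.sin (θ - y * Real.sin θ) * Real.sin θ)
      (F' := fun y θ => -(Real.cos (θ - y * Real.sin θ) * Real.sin θ ^ 2))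
      (x₀ := x) (a := (0:ℝ)) (b := π) (bound := fun _ => 1) (μ := volume) (s := univ)
      univ_mem ?_ ?_ ?_ ?_ ?_ ?_
    · exact this.2
    · filter_upwards with y
      exact (Continuous.aestronglyMeasurable (by continuity))
    · exact (Continuous.intervalIntegrable (by continuity) _ _)
    · exact (Continuous.aestronglyMeasurable (by continuity))
    · filter_upwards with θ _ y _
      have h1 : |Real.cos (θ - y * Real.sin θ)| ≤ 1 := Real.abs_cos_le_one _
      have h2 : |Real.sin θ ^ 2| ≤ 1 := by
        rw [abs_pow]
        exact pow_le_one₀ (abs_nonneg _) (Real.abs_sin_le_one _)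
      simpa [Real.norm_eq_abs, abs_mul] using mul_le_one₀ h1 (abs_nonneg _) h2
    · exact intervalIntegrable_const
    · filter_upwards with θ _ y _
      have h1 := besselJ1_inner_hasDerivAt θ y
      have := ((Real.hasDerivAt_sin (θ - y * Real.sin θ)).comp y h1).mul_const (Real.sin θ)
      refine this.congr_deriv ?_
      ring
  unfold besselJ1D besselJ1DD
  exact key.const_mul (1 / π)

lemma besselJ1_ode {x : ℝ} (hx : x ≠ 0) :
    besselJ1DD x + besselJ1D x * x⁻¹ + (1 - x⁻¹ ^ 2) * besselJ1 x = 0 := by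
  set H : ℝ → ℝ := fun θ =>
    -(Real.cos (θ - x * Real.sin θ) * Real.sin θ ^ 2)
      + Real.sin (θ - x * Real.sin θ) * Real.sin θ * x⁻¹
      + (1 - x⁻¹ ^ 2) * Real.cos (θ - x * Real.sin θ) with hH
  have hderiv : ∀ θ : ℝ, HasDerivAt
      (fun θ => Real.sin (θ - x * Real.sin θ) * (-(1 + x * Real.cos θ) / x ^ 2)) (H θ) θ := by
    intro θ
    have hg : HasDerivAt (fun θ : ℝ => θ - x * Real.sin θ) (1 - x * Real.cos θ) θ :=
      (hasDerivAt_id θ).sub ((Real.hasDerivAt_sin θ).const_mul x)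
    have h1 : HasDerivAt (fun θ : ℝ => Real.sin (θ - x * Real.sin θ))
        (Real.cos (θ - x * Real.sin θ) * (1 - x * Real.cos θ)) θ :=
      (Real.hasDerivAt_sin _).comp θ hg
    have h2 : HasDerivAt (fun θ : ℝ => -(1 + x * Real.cos θ) / x ^ 2)
        (x * Real.sin θ / x ^ 2) θ := by
      have : HasDerivAt (fun θ : ℝ => -(1 + x * Real.cos θ))
          (-(x * -Real.sin θ)) θ :=
        (((Real.hasDerivAt_cos θ).const_mul x).const_add 1).neg
      simpa [neg_mul, mul_neg, neg_neg, div_eq_mul_inv] using this.div_const (x ^ 2)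
    have := h1.mul h2
    refine this.congr_deriv ?_
    have hs : Real.sin θ ^ 2 = 1 - Real.cos θ ^ 2 := Real.sin_sq θ
    simp only [hH]
    rw [hs]
    field_simp
    ring
  have hHcont : Continuous H := by rw [hH]; continuity
  have hint : ∫ θ in (0:ℝ)..π, H θ = 0 := by
    rw [intervalIntegral.integral_eq_sub_of_hasDerivAt (fun t _ => hderiv t)
      (hHcont.intervalIntegrable _ _)]
    simp [Real.sin_pi]
  have hi1 : IntervalIntegrable (fun θ => -(Real.cos (θ - x * Real.sin θ) * Real.sin θ ^ 2))
      volume 0 π := (Continuous.intervalIntegrable (by fun_prop) _ _)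
  have hi2 : IntervalIntegrable (fun θ => Real.sin (θ - x * Real.sin θ) * Real.sin θ * x⁻¹)
      volume 0 π := (Continuous.intervalIntegrable (by fun_prop) _ _)
  have hi3 : IntervalIntegrable (fun θ => (1 - x⁻¹ ^ 2) * Real.cos (θ - x * Real.sin θ))
      volume 0 π := (Continuous.intervalIntegrable (by fun_prop) _ _)
  have hsplit : ∫ θ in (0:ℝ)..π, H θ =
      (∫ θ in (0:ℝ)..π, -(Real.cos (θ - x * Real.sin θ) * Real.sin θ ^ 2))
      + (∫ θ in (0:ℝ)..π, Real.sin (θ - x * Real.sin θ) * Real.sin θ) * x⁻¹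
      + (1 - x⁻¹ ^ 2) * ∫ θ in (0:ℝ)..π, Real.cos (θ - x * Real.sin θ) := by
    rw [hH]
    rw [intervalIntegral.integral_add (hi1.add hi2) hi3,
        intervalIntegral.integral_add hi1 hi2,
        intervalIntegral.integral_mul_const, intervalIntegral.integral_const_mul]
  rw [hint] at hsplit
  unfold besselJ1DD besselJ1D besselJ1
  linear_combination (-(1 / π)) * hsplit

lemma besselJ1_cos_lip (a b : ℝ) : |Real.cos a - Real.cos b| ≤ |a - b| := by
  rw [Real.cos_sub_cos]
  have h1 : |Real.sin ((a + b) / 2)| ≤ 1 := Real.abs_sin_le_one _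
  have h2 : |Real.sin ((a - b) / 2)| ≤ |(a - b) / 2| := Real.abs_sin_le_abs
  have h3 : |(a - b) / 2| = |a - b| / 2 := by rw [abs_div]; norm_num
  rw [abs_mul, abs_mul]
  rw [h3] at h2
  have : |(-2 : ℝ)| = 2 := by norm_num
  rw [this]
  nlinarith [abs_nonneg (Real.sin ((a + b) / 2)), abs_nonneg (Real.sin ((a - b) / 2)),
    abs_nonneg (a - b)]

lemma abs_besselJ1_le_abs (x : ℝ) : |besselJ1 x| ≤ |x| := by
  have h0 : ∫ θ in (0:ℝ)..π, Real.cos θ = 0 := by simp [integral_cos]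
  have hrw : ∫ θ in (0:ℝ)..π, Real.cos (θ - x * Real.sin θ)
      = ∫ θ in (0:ℝ)..π, (Real.cos (θ - x * Real.sin θ) - Real.cos θ) := by
    rw [intervalIntegral.integral_sub (Continuous.intervalIntegrable (by fun_prop) _ _)
      (Continuous.intervalIntegrable (by fun_prop) _ _), h0, sub_zero]
  have hbound : ‖∫ θ in (0:ℝ)..π, (Real.cos (θ - x * Real.sin θ) - Real.cos θ)‖
      ≤ |x| * |π - 0| := by
    apply intervalIntegral.norm_integral_le_of_norm_le_const
    intro θ _
    rw [Real.norm_eq_abs]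
    calc |Real.cos (θ - x * Real.sin θ) - Real.cos θ| ≤ |θ - x * Real.sin θ - θ| := besselJ1_cos_lip _ _
      _ = |x| * |Real.sin θ| := by rw [show θ - x * Real.sin θ - θ = -(x * Real.sin θ) by ring,
            abs_neg, abs_mul]
      _ ≤ |x| * 1 := by gcongr; exact Real.abs_sin_le_one _
      _ = |x| := mul_one _
  rw [besselJ1, hrw]
  rw [abs_mul]
  have hπ : (0:ℝ) < π := Real.pi_pos
  have : |1 / π| = 1 / π := abs_of_pos (by positivity)
  rw [this]
  rw [Real.norm_eq_abs] at hbound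
  have h2 : |π - 0| = π := by rw [sub_zero]; exact abs_of_pos hπ
  rw [h2] at hbound
  calc 1 / π * |∫ θ in (0:ℝ)..π, (Real.cos (θ - x * Real.sin θ) - Real.cos θ)|
      ≤ 1 / π * (|x| * π) := by gcongr
    _ = |x| := by field_simp

noncomputable def uB (t : ℝ) : ℝ := Real.sqrt t * besselJ1 t
noncomputable def vB (t : ℝ) : ℝ := Real.sqrt t * besselJ1D t + besselJ1 t / (2 * Real.sqrt t)
noncomputable def EB (t : ℝ) : ℝ := uB t ^ 2 + vB t ^ 2
noncomputable def GB (t : ℝ) : ℝ := EB t * Real.exp (3 / (4 * t))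
noncomputable def KB : ℝ := EB 1 * Real.exp (3 / 4)

lemma hasDerivAt_uB {t : ℝ} (ht : 0 < t) : HasDerivAt uB (vB t) t := by
  have h := (Real.hasDerivAt_sqrt ht.ne').mul (hasDerivAt_besselJ1 t)
  unfold uB vB
  refine h.congr_deriv ?_
  ring

lemma hasDerivAt_vB {t : ℝ} (ht : 0 < t) :
    HasDerivAt vB (-uB t + 3 / (4 * t ^ 2) * uB t) t := by
  have hsne : Real.sqrt t ≠ 0 := by
    simpa [Real.sqrt_eq_zero', not_le] using ht
  have h1 : HasDerivAt (fun t => Real.sqrt t * besselJ1D t)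
      (1 / (2 * Real.sqrt t) * besselJ1D t + Real.sqrt t * besselJ1DD t) t :=
    (Real.hasDerivAt_sqrt ht.ne').mul (hasDerivAt_besselJ1D t)
  have h2inner : HasDerivAt (fun t : ℝ => 2 * Real.sqrt t) (2 * (1 / (2 * Real.sqrt t))) t :=
    (Real.hasDerivAt_sqrt ht.ne').const_mul 2
  have h2ne : 2 * Real.sqrt t ≠ 0 := by positivity
  have h2 : HasDerivAt (fun t : ℝ => besselJ1 t / (2 * Real.sqrt t))
      (besselJ1D t / (2 * Real.sqrt t)
        + besselJ1 t * (-(2 * (1 / (2 * Real.sqrt t))) / (2 * Real.sqrt t) ^ 2)) t := by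
    have := (hasDerivAt_besselJ1 t).mul (h2inner.inv h2ne)
    refine this.congr_deriv ?_
    simp [div_eq_mul_inv]
  have hraw := h1.add h2
  have hDD : besselJ1DD t = -(besselJ1D t * t⁻¹) - (1 - t⁻¹ ^ 2) * besselJ1 t := by
    have := besselJ1_ode ht.ne'
    linarith
  unfold vB uB
  refine hraw.congr_deriv ?_
  rw [hDD]
  have ht2 : t = Real.sqrt t ^ 2 := (Real.sq_sqrt ht.le).symm
  set s := Real.sqrt t with hs
  rw [ht2]
  field_simp
  ring

lemma hasDerivAt_EB {t : ℝ} (ht : 0 < t) :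
    HasDerivAt EB (3 / (2 * t ^ 2) * (uB t * vB t)) t := by
  have hu := hasDerivAt_uB ht
  have hv := hasDerivAt_vB ht
  have := (hu.pow 2).add (hv.pow 2)
  unfold EB
  refine this.congr_deriv ?_
  ring

lemma hasDerivAt_GB {t : ℝ} (ht : 0 < t) :
    HasDerivAt GB (3 / (2 * t ^ 2) * (uB t * vB t) * Real.exp (3 / (4 * t))
      + EB t * (Real.exp (3 / (4 * t)) * (3 / 4 * -(t ^ 2)⁻¹))) t := by
  have hE := hasDerivAt_EB ht
  have hinner : HasDerivAt (fun t : ℝ => 3 / (4 * t)) (3 / 4 * -(t ^ 2)⁻¹) t := by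
    have h := (hasDerivAt_inv ht.ne').const_mul (3 / 4 : ℝ)
    have heq : (fun t : ℝ => 3 / (4 * t)) = fun t : ℝ => 3 / 4 * t⁻¹ := by
      funext y; rw [div_eq_mul_inv, mul_inv]; ring
    rw [heq]
    exact h
  have hexp : HasDerivAt (fun t : ℝ => Real.exp (3 / (4 * t)))
      (Real.exp (3 / (4 * t)) * (3 / 4 * -(t ^ 2)⁻¹)) t :=
    (Real.hasDerivAt_exp _).comp t hinner
  exact hE.mul hexp

lemma GB_deriv_nonpos {t : ℝ} (ht : 0 < t) : deriv GB t ≤ 0 := by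
  rw [(hasDerivAt_GB ht).deriv]
  have hA : (0:ℝ) < (t ^ 2)⁻¹ := by positivity
  have he : 0 < Real.exp (3 / (4 * t)) := Real.exp_pos _
  have hE : EB t = uB t ^ 2 + vB t ^ 2 := rfl
  rw [hE]
  have key : 3 / (2 * t ^ 2) * (uB t * vB t) * Real.exp (3 / (4 * t)) +
      (uB t ^ 2 + vB t ^ 2) * (Real.exp (3 / (4 * t)) * (3 / 4 * -(t ^ 2)⁻¹)) =
      -(3 / 4 * ((t ^ 2)⁻¹ * (Real.exp (3 / (4 * t)) * (uB t - vB t) ^ 2))) := by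
    ring
  rw [key]
  have hp : 0 ≤ 3 / 4 * ((t ^ 2)⁻¹ * (Real.exp (3 / (4 * t)) * (uB t - vB t) ^ 2)) := by
    positivity
  linarith

lemma GB_antitone : AntitoneOn GB (Ici 1) := by
  apply antitoneOn_of_deriv_nonpos (convex_Ici 1)
  · intro t ht
    exact (hasDerivAt_GB (lt_of_lt_of_le one_pos ht)).continuousAt.continuousWithinAt
  · intro t ht
    rw [interior_Ici] at ht
    exact (hasDerivAt_GB (lt_trans one_pos ht)).differentiableAt.differentiableWithinAt
  · intro t ht
    rw [interior_Ici] at ht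
    exact GB_deriv_nonpos (lt_trans one_pos ht)

lemma KB_nonneg : 0 ≤ KB := by
  unfold KB EB
  positivity

lemma besselJ1_sq_le_KB_div {t : ℝ} (ht : 1 ≤ t) : besselJ1 t ^ 2 ≤ KB / t := by
  have ht0 : 0 < t := lt_of_lt_of_le one_pos ht
  have h1 : besselJ1 t ^ 2 * t = uB t ^ 2 := by
    unfold uB
    rw [mul_pow, Real.sq_sqrt ht0.le]
    ring
  have h2 : uB t ^ 2 ≤ EB t := by
    unfold EB; nlinarith [sq_nonneg (vB t)]
  have h3 : EB t ≤ GB t := by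
    have h1e : (1:ℝ) ≤ Real.exp (3 / (4 * t)) := Real.one_le_exp (by positivity)
    have hEnn : 0 ≤ EB t := by unfold EB; positivity
    calc EB t = EB t * 1 := (mul_one _).symm
      _ ≤ EB t * Real.exp (3 / (4 * t)) := by gcongr
      _ = GB t := rfl
  have h4 : GB t ≤ GB 1 := GB_antitone (mem_Ici.2 le_rfl) (mem_Ici.2 ht) ht
  have h5 : GB 1 = KB := by unfold GB KB; norm_num
  rw [le_div_iff₀ ht0]
  rw [h1]
  linarith

/-- Let `m > 0`.  There is a constant `C > 0` such that for every
`r ≥ 0`: `∫_r^∞ J₁(m√(s²−r²))²/√(s²−r²) ds ≤ C` (the integrand, which is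
nonnegative, is integrated over `(r,∞)`; its continuous extension at `s = r`
by `0` is immaterial). -/
theorem besselJ1_tail_uniform_bound
    (m : ℝ) (hm : 0 < m) :
    ∃ C > 0, ∀ r : ℝ, 0 ≤ r →
      ∫⁻ s in Ioi r, ENNReal.ofReal
          (besselJ1 (m * Real.sqrt (s ^ 2 - r ^ 2)) ^ 2 / Real.sqrt (s ^ 2 - r ^ 2))
        ≤ ENNReal.ofReal C := by
  refine ⟨1 + 2 * KB, by nlinarith [KB_nonneg], fun r hr => ?_⟩
  obtain ⟨a, ha⟩ : ∃ a : ℝ, a = r + m⁻¹ := ⟨_, rfl⟩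
  have hra : r < a := by rw [ha]; nlinarith [inv_pos.2 hm]
  obtain ⟨g, hg⟩ : ∃ g : ℝ → ℝ≥0∞, g = fun s =>
      (Ioc r a).indicator (fun _ => ENNReal.ofReal (m * (1 + KB))) s
      + (Ioi a).indicator (fun s => ENNReal.ofReal (KB / m * ((s - r) ^ 2)⁻¹)) s := ⟨_, rfl⟩
  have hgmeas : Measurable g := by
    rw [hg]
    apply Measurable.add
    · exact (measurable_const).indicator measurableSet_Ioc
    · refine Measurable.indicator ?_ measurableSet_Ioi
      exact (((measurable_id.sub_const r).pow_const 2).inv.const_mul _).ennreal_ofReal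
  -- pointwise bound
  have hpoint : ∀ s ∈ Ioi r, ENNReal.ofReal
      (besselJ1 (m * Real.sqrt (s ^ 2 - r ^ 2)) ^ 2 / Real.sqrt (s ^ 2 - r ^ 2)) ≤ g s := by
    intro s hs
    rw [mem_Ioi] at hs
    have hw2 : 0 < s ^ 2 - r ^ 2 := by nlinarith
    obtain ⟨w, hwdef⟩ : ∃ w : ℝ, w = Real.sqrt (s ^ 2 - r ^ 2) := ⟨_, rfl⟩
    rw [← hwdef]
    have hw : 0 < w := hwdef ▸ Real.sqrt_pos.2 hw2
    have hwsq : w ^ 2 = s ^ 2 - r ^ 2 := hwdef ▸ Real.sq_sqrt hw2.le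
    have hjsq : ∀ x : ℝ, 1 ≤ m * x → besselJ1 (m * x) ^ 2 ≤ KB / (m * x) :=
      fun x hx => besselJ1_sq_le_KB_div hx
    by_cases hcase : s ≤ a
    · -- region A
      have hmem : s ∈ Ioc r a := ⟨hs, hcase⟩
      have hnot : s ∉ Ioi a := by simp [not_lt.2 hcase]
      rw [hg]
      simp only [indicator_of_mem hmem, indicator_of_notMem hnot, add_zero]
      apply ENNReal.ofReal_le_ofReal
      rcases le_or_gt (m * w) 1 with h1 | h1
      · have hj : besselJ1 (m * w) ^ 2 ≤ (m * w) ^ 2 := by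
          have habs := abs_besselJ1_le_abs (m * w)
          calc besselJ1 (m * w) ^ 2 = |besselJ1 (m * w)| ^ 2 := (sq_abs _).symm
            _ ≤ |m * w| ^ 2 := by gcongr
            _ = (m * w) ^ 2 := sq_abs _
        have hd : besselJ1 (m * w) ^ 2 / w ≤ (m * w) ^ 2 / w :=
          (div_le_div_iff_of_pos_right hw).2 hj -- fix below
        have he : (m * w) ^ 2 / w = m * (m * w) := by
          rw [eq_comm, eq_div_iff hw.ne']; nlinarith [hwsq]
        rw [he] at hd
        nlinarith [KB_nonneg]
      · have hj := hjsq w h1.le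
        have hd : besselJ1 (m * w) ^ 2 / w ≤ KB / (m * w) / w :=
          (div_le_div_iff_of_pos_right hw).2 hj
        have he : KB / (m * w) / w = KB / (m * w ^ 2) := by
          rw [div_div, mul_assoc, ← sq]
        rw [he] at hd
        have h3 : KB / (m * w ^ 2) ≤ KB * m := by
          rw [div_le_iff₀ (by positivity)]
          have h2 : 1 ≤ (m * w) ^ 2 := by
            nlinarith [mul_le_mul h1.le h1.le zero_le_one (by positivity : (0:ℝ) ≤ m * w)]
          nlinarith [mul_le_mul_of_nonneg_left h2 KB_nonneg]
        nlinarith [KB_nonneg]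
    · -- region B
      push_neg at hcase
      have hmem : s ∈ Ioi a := hcase
      have hnot : s ∉ Ioc r a := by simp [not_le.2 hcase]
      rw [hg]
      simp only [indicator_of_mem hmem, indicator_of_notMem hnot, zero_add]
      apply ENNReal.ofReal_le_ofReal
      have hsr : m⁻¹ < s - r := by rw [ha] at hcase; linarith
      have hw2' : (s - r) ^ 2 ≤ s ^ 2 - r ^ 2 := by nlinarith
      have hwge : m⁻¹ ≤ w := by
        have : m⁻¹ ^ 2 ≤ w ^ 2 := by rw [hwsq]; nlinarith [inv_pos.2 hm]
        nlinarith [inv_pos.2 hm, hw]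
      have h1 : (1 : ℝ) ≤ m * w := by
        calc (1 : ℝ) = m * m⁻¹ := by field_simp
          _ ≤ m * w := by gcongr
      have hj := hjsq w h1
      have hd : besselJ1 (m * w) ^ 2 / w ≤ KB / (m * w) / w :=
        (div_le_div_iff_of_pos_right hw).2 hj
      have he : KB / (m * w) / w = KB / (m * w ^ 2) := by
        rw [div_div, mul_assoc, ← sq]
      rw [he, hwsq] at hd
      have hsq : (0:ℝ) < (s - r) ^ 2 := by nlinarith
      have h3 : KB / (m * (s ^ 2 - r ^ 2)) ≤ KB / (m * (s - r) ^ 2) := by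
        apply div_le_div_of_nonneg_left KB_nonneg (mul_pos hm hsq)
        nlinarith
      have h4 : KB / (m * (s - r) ^ 2) = KB / m * ((s - r) ^ 2)⁻¹ := by
        rw [div_mul_eq_div_div, div_eq_mul_inv (KB / m)]
      linarith [hd, h3, h4.ge, h4.le]
  -- integrate the bound
  have step1 := setLIntegral_mono (μ := volume) hgmeas hpoint
  refine step1.trans ?_
  refine (setLIntegral_le_lintegral _ _).trans ?_
  rw [hg]
  rw [lintegral_add_left ((measurable_const).indicator measurableSet_Ioc)]
  have hterm1 : ∫⁻ s, (Ioc r a).indicator (fun _ => ENNReal.ofReal (m * (1 + KB))) s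
      = ENNReal.ofReal (1 + KB) := by
    rw [lintegral_indicator measurableSet_Ioc]
    rw [setLIntegral_const]
    rw [Real.volume_Ioc]
    rw [← ENNReal.ofReal_mul (by nlinarith [KB_nonneg])]
    congr 1
    rw [ha]
    field_simp
    ring
  have hterm2 : ∫⁻ s, (Ioi a).indicator
      (fun s => ENNReal.ofReal (KB / m * ((s - r) ^ 2)⁻¹)) s = ENNReal.ofReal KB := by
    rw [lintegral_indicator measurableSet_Ioi]
    have hderiv : ∀ x ∈ Ici a, HasDerivAt (fun s : ℝ => -(s - r)⁻¹) (((x - r) ^ 2)⁻¹) x := by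
      intro x hx
      have hxr : x - r ≠ 0 := by
        have : r < x := lt_of_lt_of_le hra hx
        intro hc; nlinarith [sub_eq_zero.1 hc]
      have := (((hasDerivAt_id x).sub_const r).inv hxr).neg
      refine this.congr_deriv ?_
      simp only [id_eq]
      field_simp
    have hpos : ∀ x ∈ Ioi a, (0:ℝ) ≤ ((x - r) ^ 2)⁻¹ := fun x _ => by positivity
    have htend : Tendsto (fun s : ℝ => -(s - r)⁻¹) atTop (𝓝 0) := by
      have h1 : Tendsto (fun s : ℝ => s - r) atTop atTop :=
        tendsto_atTop_add_const_right atTop (-r) tendsto_id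
      have h2 := (tendsto_inv_atTop_zero.comp h1).neg
      rw [neg_zero] at h2
      exact h2.congr fun s => rfl
    have hval : ∫ x in Ioi a, ((x - r) ^ 2)⁻¹ = m := by
      have har : a - r = m⁻¹ := by rw [ha]; ring
      rw [integral_Ioi_of_hasDerivAt_of_nonneg' hderiv hpos htend, har]
      simp
    have hint : IntegrableOn (fun x : ℝ => ((x - r) ^ 2)⁻¹) (Ioi a) :=
      integrableOn_Ioi_deriv_of_nonneg' hderiv hpos htend
    rw [← ofReal_integral_eq_lintegral_ofReal (hint.const_mul (KB / m))
      (Eventually.of_forall fun x =>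
        mul_nonneg (div_nonneg KB_nonneg hm.le) (by positivity))]
    rw [MeasureTheory.integral_const_mul, hval]
    congr 1
    field_simp
  rw [hterm1, hterm2]
  rw [← ENNReal.ofReal_add (by nlinarith [KB_nonneg]) KB_nonneg]
  apply ENNReal.ofReal_le_ofReal
  linarith
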